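/- Let Γ = k[s]/(s² = ηs) with 2η = 0 and s primitive, and let P̃_* be the complex with P̃_0 = k{p̃_0}, P̃_a = Γ{p̃_a} for a ≥ 1, and differential ∂̃(p̃_1) = p̃_0, ∂̃(p̃_a) = −p̃_{a−1}(s + aη) for a ≥ 2. Define Φ: P̃_* ⊗_k P̃_* → P̃_* by Φ(p̃_{a1} ⊗ p̃_{a2}) = 0, Φ(p̃_{a1} ⊗ p̃_{a2}s) = Φ(p̃_{a1}s ⊗ p̃_{a2}) = −p̃_{a1+a2}, Φ(p̃_{a1}s ⊗ p̃_{a2}s) = −p̃_{a1+a2}(s+η) for a1, a2 ≥ 1, and by the canonical identifications when a1 = 0 or a2 = 0. Then Φ is a Γ-linear chain map extending the fold map, and Φ = Φ ∘ τ (commutativity). -/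

import Mathlib

/-!
**Statement 14.**  Let `Γ = k[s]/(s² = ηs)` with `2η = 0` and `s` primitive, and let `P̃_*` be
the complex with `P̃_0 = k{p̃_0}`, `P̃_a = Γ{p̃_a}` for `a ≥ 1`, and differential
`∂̃(p̃_1) = p̃_0`, `∂̃(p̃_a) = −p̃_{a−1}(s + aη)` for `a ≥ 2`.  Define
`Φ : P̃_* ⊗_k P̃_* → P̃_*` by `Φ(p̃_{a₁} ⊗ p̃_{a₂}) = 0`,
`Φ(p̃_{a₁} ⊗ p̃_{a₂}s) = Φ(p̃_{a₁}s ⊗ p̃_{a₂}) = −p̃_{a₁+a₂}`,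
`Φ(p̃_{a₁}s ⊗ p̃_{a₂}s) = −p̃_{a₁+a₂}(s+η)` for `a₁, a₂ ≥ 1`, and by the canonical
identifications when `a₁ = 0` or `a₂ = 0`.  Then `Φ` is a `Γ`-linear chain map extending the
fold map, and `Φ = Φ ∘ τ` (commutativity).

Concrete model: `P̃_a = Γ = k × k` (basis `p̃_a, p̃_a s`) for `a ≥ 1` and `P̃_0 = k`; a slot
`P̃_{a₁} ⊗ P̃_{a₂}` with `a₁, a₂ ≥ 1` is `k × k × k × k` with coordinates the coefficients of
`p̃⊗p̃, p̃⊗p̃s, p̃s⊗p̃, p̃s⊗p̃s`; boundary slots `P̃_0 ⊗ P̃_a ≅ P̃_a ≅ P̃_a ⊗ P̃_0` are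
identified with `Γ`, on which `Φ` is the identity (the fold map).  `phiG` is the generic slot
component of `Φ`; `dtilde a = −(s + aη)·` is the differential of `P̃` in degrees `a ≥ 2`, and
`p̃_1 ↦ p̃_0`, `p̃_1 s ↦ 0` in degree 1.  `tpart1 η a₁` and `tpart2 η a₂` are the two Koszul-
signed components of the tensor differential out of a generic slot (the sign on the `1 ⊗ ∂`
part is `−` on the `p̃⊗·` rows and `+` on the `p̃s⊗·` rows, as `‖p̃_a‖ = 2a−1` is odd);
`tsAct η` is the diagonal action of `s` on a generic slot, `tmulS η` the action of `s` on `Γ`,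
and `ttau` the graded twist (sign `−1` exactly on the `p̃⊗p̃` coordinate).
-/

variable {k : Type*} [CommRing k]

/-- Right multiplication by `s + cη` on `Γ = k ⊕ k·s` (using `s² = ηs`). -/
def trmul (η : k) (c : ℕ) : k × k → k × k :=
  fun x => ((c : k) * η * x.1, x.1 + ((c : k) + 1) * η * x.2)

/-- The differential `∂̃_a = −(·(s + aη))` of `P̃` in degrees `a ≥ 2`. -/
def dtilde (η : k) (a : ℕ) : k × k → k × k := fun x => -(trmul η a x)

/-- The generic slot component of `Φ`:
`a·p̃⊗p̃ + b·p̃⊗p̃s + c·p̃s⊗p̃ + d·p̃s⊗p̃s ↦ −(b+c)·p̃ − d·p̃(s+η)`. -/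
def phiG (η : k) : k × k × k × k → k × k :=
  fun x => (-(x.2.1 + x.2.2.1) - x.2.2.2 * η, -x.2.2.2)

/-- The `∂̃ ⊗ 1` component of the tensor differential, from slot `(a₁, a₂)` to
`(a₁ − 1, a₂)`, for `a₁ ≥ 2` (no Koszul sign; the `−` of `∂̃` is included). -/
def tpart1 (η : k) (a₁ : ℕ) : k × k × k × k → k × k × k × k :=
  fun x => -(((a₁ : k) * η * x.1, (a₁ : k) * η * x.2.1,
    x.1 + ((a₁ : k) + 1) * η * x.2.2.1, x.2.1 + ((a₁ : k) + 1) * η * x.2.2.2))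

/-- The Koszul-signed `(−1)^{‖x‖} 1 ⊗ ∂̃` component of the tensor differential, from slot
`(a₁, a₂)` to `(a₁, a₂ − 1)`, for `a₂ ≥ 2`. -/
def tpart2 (η : k) (a₂ : ℕ) : k × k × k × k → k × k × k × k :=
  fun x => ((a₂ : k) * η * x.1, x.1 + ((a₂ : k) + 1) * η * x.2.1,
    -((a₂ : k) * η * x.2.2.1), -(x.2.2.1 + ((a₂ : k) + 1) * η * x.2.2.2))

/-- The diagonal action of the primitive `s` on a generic slot of `P̃ ⊗ P̃`. -/
def tsAct (η : k) : k × k × k × k → k × k × k × k :=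
  fun x => (0, x.1 + η * x.2.1, -(x.1 + η * x.2.2.1), x.2.1 + x.2.2.1)

/-- Right multiplication by `s` on `Γ`. -/
def tmulS (η : k) : k × k → k × k := fun x => (0, x.1 + η * x.2)

/-- The graded twist `τ` on a generic slot of `P̃ ⊗ P̃`. -/
def ttau : k × k × k × k → k × k × k × k := fun x => (-x.1, x.2.2.1, x.2.1, x.2.2.2)

theorem statement14 (η : k) (hη : 2 * η = 0) :
    -- chain map, generic slots `(a₁, a₂)` with `a₁, a₂ ≥ 2`:
    (∀ (a₁ a₂ : ℕ) (x : k × k × k × k),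
      dtilde η (a₁ + a₂ + 4) (phiG η x)
        = phiG η (tpart1 η (a₁ + 2) x) + phiG η (tpart2 η (a₂ + 2) x)) ∧
    -- chain map, slots `(1, a₂)` with `a₂ ≥ 2` (`∂̃⊗1` lands in `P̃_0 ⊗ P̃_{a₂} ≅ Γ`,
    -- where `Φ` is the canonical identification, i.e. the fold map):
    (∀ (a₂ : ℕ) (x : k × k × k × k),
      dtilde η (a₂ + 3) (phiG η x) = (x.1, x.2.1) + phiG η (tpart2 η (a₂ + 2) x)) ∧
    -- chain map, slots `(a₁, 1)` with `a₁ ≥ 2`: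
    (∀ (a₁ : ℕ) (x : k × k × k × k),
      dtilde η (a₁ + 3) (phiG η x) = phiG η (tpart1 η (a₁ + 2) x) + (-x.1, x.2.2.1)) ∧
    -- chain map, slot `(1, 1)`:
    (∀ x : k × k × k × k,
      dtilde η 2 (phiG η x) = (x.1, x.2.1) + (-x.1, x.2.2.1)) ∧
    -- `Φ` is `k`-linear and `Γ`-linear (commutes with the action of the generator `s`):
    (∀ x y : k × k × k × k, phiG η (x + y) = phiG η x + phiG η y) ∧
    (∀ (c : k) (x : k × k × k × k), phiG η (c • x) = c • phiG η x) ∧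
    (∀ x : k × k × k × k, phiG η (tsAct η x) = tmulS η (phiG η x)) ∧
    -- commutativity: `Φ ∘ τ = Φ`:
    (∀ x : k × k × k × k, phiG η (ttau x) = phiG η x) := by
  refine ⟨?_, ?_, ?_, ?_, ?_, ?_, ?_, ?_⟩ <;> intros <;>
    simp only [dtilde, trmul, phiG, tpart1, tpart2, tsAct, tmulS, ttau, Prod.mk_add_mk,
      Prod.ext_iff, Prod.neg_mk, Prod.smul_mk, smul_eq_mul, Prod.fst_add, Prod.snd_add, Prod.smul_fst, Prod.smul_snd, Nat.cast_add, Nat.cast_ofNat,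
      Nat.cast_one] <;> push_cast <;> constructor
  case refine_1.left =>
    rename_i a b c
    linear_combination ((b:k)*c.2.1 + 2*c.2.1 - c.2.2.1 - η*c.2.2.2) * hη
  case refine_2.left =>
    rename_i a b; linear_combination (((a:k)+3)*b.2.1) * hη
  case refine_2.right =>
    rename_i a b; linear_combination b.2.2.2 * hη
  case refine_3.right =>
    rename_i a b; linear_combination b.2.2.2 * hη
  case refine_4.left =>
    rename_i a; linear_combination (a.2.1 + a.2.2.1 + η*a.2.2.2) * hη
  case refine_4.right =>
    rename_i a; linear_combination (2*a.2.2.2) * hη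
  case refine_7.left =>
    rename_i a; linear_combination (-a.2.1) * hη
  case refine_7.right =>
    rename_i a; linear_combination a.2.2.2 * hη
  case refine_8.right => trivial
  all_goals ring
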